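/- Let a and n be integers with a ≥ 5, n ≥ 3, a(n−2) ≥ 4n, and either a ≡ 0 (mod 4), or (a ≡ 1 and n ≡ 2 (mod 4)), or (a ≡ 2 and n ≡ 0 (mod 2)), or (a ≡ 3 and n ≡ 2 (mod 4)). Then the Sylvester number (genus) of the triple {S_{a,n}, S_{a,n+1}, S_{a,n+2}} equals (1/8)·((a²+16a−16)n³ − 12a·n² − (4a²+14a−24)n + 4a − 8). -/

import Mathlib

set_option maxHeartbeats 1000000


/-- The 2-step star number `S_{a,n} = a·n·(n−2) + 1`. -/
def twoStepStar (a n : ℕ) : ℕ := a * n * (n - 2) + 1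

/-- The Sylvester number (genus) of a set `A` of natural numbers: the number of nonnegative
integers that are not a nonnegative integer linear combination of elements of `A`. -/
noncomputable def sylvesterNumber (A : Set ℕ) : ℕ :=
  Set.ncard {m : ℕ | m ∉ AddSubmonoid.closure A}

namespace StarCase2

/-! Parametrization: `a = A+5`, `n = m+3`, and `Y` is chosen so that
`(A+5)*(m+1) = 4*(Y+m+3)` (encoding the divisibility and size hypotheses). -/

def sv (m Y : ℕ) : ℕ := 4 * (m + 3) * (Y + m + 3) + 1
def tv (A m Y : ℕ) : ℕ := sv m Y + (A + 5) * (2 * m + 5)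
def uv (A m Y : ℕ) : ℕ := sv m Y + (A + 5) * (4 * m + 12)

def Rg (m Y : ℕ) : Finset (ℕ × ℕ) :=
  Finset.range (2 * m + 5) ×ˢ Finset.range (Y + 2 * m + 6) ∪
    Finset.Ico (2 * m + 5) (4 * m + 12) ×ˢ Finset.range (Y + 1)

def nuf (A m Y : ℕ) (p : ℕ × ℕ) : ℕ := p.1 * tv A m Y + p.2 * uv A m Y

lemma sv_pos (m Y : ℕ) : 0 < sv m Y := by simp [sv]

lemma mem_Rg {m Y : ℕ} {p : ℕ × ℕ} :
    p ∈ Rg m Y ↔ (p.1 < 2 * m + 5 ∧ p.2 < Y + 2 * m + 6) ∨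
      (2 * m + 5 ≤ p.1 ∧ p.1 < 4 * m + 12 ∧ p.2 < Y + 1) := by
  simp [Rg, Finset.mem_union, Finset.mem_product, Finset.mem_Ico, and_assoc]

lemma Rg_disjoint (m Y : ℕ) :
    Disjoint (Finset.range (2 * m + 5) ×ˢ Finset.range (Y + 2 * m + 6))
      (Finset.Ico (2 * m + 5) (4 * m + 12) ×ˢ Finset.range (Y + 1)) := by
  rw [Finset.disjoint_left]
  rintro ⟨x, y⟩ h1 h2
  simp only [Finset.mem_product, Finset.mem_range, Finset.mem_Ico] at h1 h2
  omega

lemma card_Rg (m Y : ℕ) : (Rg m Y).card = sv m Y := by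
  rw [Rg, Finset.card_union_of_disjoint (Rg_disjoint m Y)]
  simp only [Finset.card_product, Finset.card_range, Nat.card_Ico, sv]
  have h : 4 * m + 12 - (2 * m + 5) = 2 * m + 7 := by omega
  rw [h]; ring

/-- Generic description of the additive closure of a triple. -/
lemma mem_closure_triple {s t u w : ℕ} :
    w ∈ AddSubmonoid.closure ({s, t, u} : Set ℕ) ↔ ∃ z x y : ℕ, w = z * s + x * t + y * u := by
  constructor
  · intro hw
    induction hw using AddSubmonoid.closure_induction with
    | mem v hv =>
      rcases hv with rfl | rfl | rfl
      · exact ⟨1, 0, 0, by ring⟩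
      · exact ⟨0, 1, 0, by ring⟩
      · exact ⟨0, 0, 1, by ring⟩
    | zero => exact ⟨0, 0, 0, by ring⟩
    | add v w _ _ hv hw =>
      obtain ⟨z, x, y, rfl⟩ := hv
      obtain ⟨z', x', y', rfl⟩ := hw
      exact ⟨z + z', x + x', y + y', by ring⟩
  · rintro ⟨z, x, y, rfl⟩
    have hs : s ∈ AddSubmonoid.closure ({s, t, u} : Set ℕ) :=
      AddSubmonoid.subset_closure (by simp)
    have ht : t ∈ AddSubmonoid.closure ({s, t, u} : Set ℕ) :=
      AddSubmonoid.subset_closure (by simp)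
    have hu : u ∈ AddSubmonoid.closure ({s, t, u} : Set ℕ) :=
      AddSubmonoid.subset_closure (by simp)
    have h1 : z * s ∈ AddSubmonoid.closure ({s, t, u} : Set ℕ) := by
      simpa [nsmul_eq_mul] using AddSubmonoid.nsmul_mem _ hs z
    have h2 : x * t ∈ AddSubmonoid.closure ({s, t, u} : Set ℕ) := by
      simpa [nsmul_eq_mul] using AddSubmonoid.nsmul_mem _ ht x
    have h3 : y * u ∈ AddSubmonoid.closure ({s, t, u} : Set ℕ) := by
      simpa [nsmul_eq_mul] using AddSubmonoid.nsmul_mem _ hu y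
    exact add_mem (add_mem h1 h2) h3

lemma modeq_add_mul (s v c : ℕ) : v ≡ v + c * s [MOD s] := by
  have h0 : (0 : ℕ) ≡ c * s [MOD s] := ((Nat.modEq_zero_iff_dvd).2 ⟨c, mul_comm c s⟩).symm
  simpa using (Nat.ModEq.add_left v h0)

/-- Reduction: every `x·t + y·u` is `≥` and congruent mod `s` to some `ν p` with `p ∈ Rg`. -/
lemma reduce (A m Y : ℕ) : ∀ v x y, x * tv A m Y + y * uv A m Y = v →
    ∃ p ∈ Rg m Y, nuf A m Y p ≤ v ∧ nuf A m Y p ≡ v [MOD sv m Y] := by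
  intro v
  induction v using Nat.strong_induction_on with
  | _ v ih =>
    intro x y hv
    rcases le_or_gt (4 * m + 12) x with hx | hx
    · obtain ⟨x₀, rfl⟩ := Nat.exists_eq_add_of_le hx
      have hval : (x₀ * tv A m Y + (y + (2 * m + 5)) * uv A m Y) + (2 * m + 7) * sv m Y = v := by
        rw [← hv]; simp only [tv, uv, sv]; ring
      have hlt : x₀ * tv A m Y + (y + (2 * m + 5)) * uv A m Y < v := by
        have : 0 < (2 * m + 7) * sv m Y := by simp [sv]
        omega
      obtain ⟨p, hp, hle, hmod⟩ := ih _ hlt x₀ (y + (2 * m + 5)) rfl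
      refine ⟨p, hp, le_trans hle (le_of_lt hlt), hmod.trans ?_⟩
      rw [← hval]; exact modeq_add_mul _ _ _
    rcases le_or_gt (Y + 2 * m + 6) y with hy | hy
    · obtain ⟨y₀, rfl⟩ := Nat.exists_eq_add_of_le hy
      have hval : ((x + (2 * m + 7)) * tv A m Y + y₀ * uv A m Y) + (A + Y + 4) * sv m Y = v := by
        rw [← hv]; simp only [tv, uv, sv]; ring
      have hlt : (x + (2 * m + 7)) * tv A m Y + y₀ * uv A m Y < v := by
        have : 0 < (A + Y + 4) * sv m Y := by simp [sv]
        omega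
      obtain ⟨p, hp, hle, hmod⟩ := ih _ hlt (x + (2 * m + 7)) y₀ rfl
      refine ⟨p, hp, le_trans hle (le_of_lt hlt), hmod.trans ?_⟩
      rw [← hval]; exact modeq_add_mul _ _ _
    rcases le_or_gt (2 * m + 5) x with hx2 | hx2
    · rcases le_or_gt (Y + 1) y with hy2 | hy2
      · obtain ⟨x₀, rfl⟩ := Nat.exists_eq_add_of_le hx2
        obtain ⟨y₀, rfl⟩ := Nat.exists_eq_add_of_le hy2
        have hval : (x₀ * tv A m Y + y₀ * uv A m Y) + (A + Y + 2 * m + 11) * sv m Y = v := by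
          rw [← hv]; simp only [tv, uv, sv]; ring
        have hlt : x₀ * tv A m Y + y₀ * uv A m Y < v := by
          have : 0 < (A + Y + 2 * m + 11) * sv m Y := by simp [sv]
          omega
        obtain ⟨p, hp, hle, hmod⟩ := ih _ hlt x₀ y₀ rfl
        refine ⟨p, hp, le_trans hle (le_of_lt hlt), hmod.trans ?_⟩
        rw [← hval]; exact modeq_add_mul _ _ _
      · exact ⟨(x, y), mem_Rg.mpr (Or.inr ⟨hx2, hx, hy2⟩), le_of_eq hv, by rw [nuf]; rw [hv]⟩
    · exact ⟨(x, y), mem_Rg.mpr (Or.inl ⟨hx2, hy⟩), le_of_eq hv, by rw [nuf]; rw [hv]⟩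

/-- Core of the injectivity argument, for `0 ≤ k < 3`. -/
lemma inj_core (A m Y : ℕ) (x y x' y' : ℕ)
    (hp : (x < 2 * m + 5 ∧ y < Y + 2 * m + 6) ∨
      (2 * m + 5 ≤ x ∧ x < 4 * m + 12 ∧ y < Y + 1))
    (hp' : (x' < 2 * m + 5 ∧ y' < Y + 2 * m + 6) ∨
      (2 * m + 5 ≤ x' ∧ x' < 4 * m + 12 ∧ y' < Y + 1))
    (k : ℤ) (hk0 : 0 ≤ k) (hk3 : k < 3)
    (heq : (2 * (m : ℤ) + 5) * ((x' : ℤ) - x) + (4 * (m : ℤ) + 12) * ((y' : ℤ) - y)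
      = k * (4 * ((m : ℤ) + 3) * ((Y : ℤ) + (m : ℤ) + 3) + 1)) :
    x = x' ∧ y = y' := by
  have h5 : (2 * (m : ℤ) + 5) * ((x' : ℤ) - x) - k
      = (4 * (m : ℤ) + 12) * (k * ((Y : ℤ) + (m : ℤ) + 3) - ((y' : ℤ) - y)) := by
    linear_combination heq
  have h6 : ((x' : ℤ) - x) - (2 * (m : ℤ) + 5) * k
      = (4 * (m : ℤ) + 12) *
        ((2 * (m : ℤ) + 5) * (k * ((Y : ℤ) + (m : ℤ) + 3) - ((y' : ℤ) - y))
          - ((m : ℤ) + 2) * ((x' : ℤ) - x)) := by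
    linear_combination (2 * (m : ℤ) + 5) * h5
  obtain ⟨j, h6⟩ : ∃ j : ℤ, ((x' : ℤ) - x) - (2 * (m : ℤ) + 5) * k = (4 * (m : ℤ) + 12) * j :=
    ⟨_, h6⟩
  have hdx1 : ((x' : ℤ) - x) ≤ 4 * (m : ℤ) + 11 := by
    have h1 : x' < 4 * m + 12 := by omega
    have h2 : (x' : ℤ) < 4 * (m : ℤ) + 12 := by exact_mod_cast h1
    have hx0 : (0 : ℤ) ≤ (x : ℤ) := Int.ofNat_nonneg x
    linarith
  have hdx2 : -(4 * (m : ℤ) + 11) ≤ ((x' : ℤ) - x) := by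
    have h1 : x < 4 * m + 12 := by omega
    have h2 : (x : ℤ) < 4 * (m : ℤ) + 12 := by exact_mod_cast h1
    have hx0 : (0 : ℤ) ≤ (x' : ℤ) := Int.ofNat_nonneg x'
    linarith
  have hmpos : (0 : ℤ) < 4 * (m : ℤ) + 12 := by positivity
  interval_cases k
  · -- k = 0
    have hj1 : (4 * (m : ℤ) + 12) * j < (4 * (m : ℤ) + 12) * 1 := by rw [← h6]; linarith
    have hj2 : (4 * (m : ℤ) + 12) * (-1) < (4 * (m : ℤ) + 12) * j := by rw [← h6]; linarith
    have a1 := lt_of_mul_lt_mul_left hj1 (le_of_lt hmpos)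
    have a2 := lt_of_mul_lt_mul_left hj2 (le_of_lt hmpos)
    have hj0 : j = 0 := by omega
    rw [hj0, mul_zero] at h6
    have hdx : (x' : ℤ) - x = 0 := by linarith
    have h7 : (4 * (m : ℤ) + 12) * ((y' : ℤ) - y) = (4 * (m : ℤ) + 12) * 0 := by
      linear_combination heq - (2 * (m : ℤ) + 5) * hdx
    have hdy := mul_left_cancel₀ (ne_of_gt hmpos) h7
    constructor <;> omega
  · -- k = 1
    have hj1 : (4 * (m : ℤ) + 12) * j < (4 * (m : ℤ) + 12) * 1 := by rw [← h6]; linarith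
    have hj2 : (4 * (m : ℤ) + 12) * (-2) < (4 * (m : ℤ) + 12) * j := by rw [← h6]; linarith
    have a1 := lt_of_mul_lt_mul_left hj1 (le_of_lt hmpos)
    have a2 := lt_of_mul_lt_mul_left hj2 (le_of_lt hmpos)
    have hj0 : j = 0 ∨ j = -1 := by omega
    rcases hj0 with hj0 | hj0 <;> rw [hj0] at h6
    · -- Δx = 2m+5
      have hdx : (x' : ℤ) - x = 2 * (m : ℤ) + 5 := by linarith
      have h7 : (4 * (m : ℤ) + 12) * ((y' : ℤ) - y) = (4 * (m : ℤ) + 12) * ((Y : ℤ) + 1) := by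
        linear_combination heq - (2 * (m : ℤ) + 5) * hdx
      have hdy := mul_left_cancel₀ (ne_of_gt hmpos) h7
      omega
    · -- Δx = −(2m+7)
      have hdx : (x' : ℤ) - x = -(2 * (m : ℤ) + 7) := by linarith
      have h7 : (4 * (m : ℤ) + 12) * ((y' : ℤ) - y)
          = (4 * (m : ℤ) + 12) * ((Y : ℤ) + 2 * (m : ℤ) + 6) := by
        linear_combination heq - (2 * (m : ℤ) + 5) * hdx
      have hdy := mul_left_cancel₀ (ne_of_gt hmpos) h7
      omega
  · -- k = 2
    have hj1 : (4 * (m : ℤ) + 12) * j < (4 * (m : ℤ) + 12) * 1 := by rw [← h6]; linarith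
    have hj2 : (4 * (m : ℤ) + 12) * (-2) < (4 * (m : ℤ) + 12) * j := by rw [← h6]; linarith
    have a1 := lt_of_mul_lt_mul_left hj1 (le_of_lt hmpos)
    have a2 := lt_of_mul_lt_mul_left hj2 (le_of_lt hmpos)
    have hj0 : j = 0 ∨ j = -1 := by omega
    rcases hj0 with hj0 | hj0 <;> rw [hj0] at h6
    · -- Δx = 4m+10
      have hdx : (x' : ℤ) - x = 4 * (m : ℤ) + 10 := by linarith
      have h7 : (4 * (m : ℤ) + 12) * ((y' : ℤ) - y)
          = (4 * (m : ℤ) + 12) * (2 * (Y : ℤ) + 2) := by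
        linear_combination heq - (2 * (m : ℤ) + 5) * hdx
      have hdy := mul_left_cancel₀ (ne_of_gt hmpos) h7
      omega
    · -- Δx = −2
      have hdx : (x' : ℤ) - x = -2 := by linarith
      have h7 : (4 * (m : ℤ) + 12) * ((y' : ℤ) - y)
          = (4 * (m : ℤ) + 12) * (2 * (Y : ℤ) + 2 * (m : ℤ) + 7) := by
        linear_combination heq - (2 * (m : ℤ) + 5) * hdx
      have hdy := mul_left_cancel₀ (ne_of_gt hmpos) h7
      omega

/-- Distinct points of `Rg` have distinct values of `ν` modulo `s`. -/
lemma inj (A m Y : ℕ) (hrel : (A + 5) * (m + 1) = 4 * (Y + m + 3)) :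
    ∀ p ∈ Rg m Y, ∀ p' ∈ Rg m Y,
      nuf A m Y p ≡ nuf A m Y p' [MOD sv m Y] → p = p' := by
  rintro ⟨x, y⟩ hp ⟨x', y'⟩ hp' hmod
  have hp1 := mem_Rg.mp hp
  have hp2 := mem_Rg.mp hp'
  simp only at hp1 hp2
  have hdvd : (sv m Y : ℤ) ∣ (nuf A m Y (x', y') : ℤ) - (nuf A m Y (x, y) : ℤ) := hmod.dvd
  have key : ((nuf A m Y (x', y') : ℤ) - (nuf A m Y (x, y) : ℤ))
      = (((x' : ℤ) + y') - ((x : ℤ) + y)) * (sv m Y : ℤ)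
        + ((A : ℤ) + 5) *
          ((2 * (m : ℤ) + 5) * ((x' : ℤ) - x) + (4 * (m : ℤ) + 12) * ((y' : ℤ) - y)) := by
    simp only [nuf, tv, uv, sv]; push_cast; ring
  rw [key] at hdvd
  have h2 : (sv m Y : ℤ) ∣ (((x' : ℤ) + y') - ((x : ℤ) + y)) * (sv m Y : ℤ) :=
    Dvd.intro_left _ rfl
  have h1 : (sv m Y : ℤ) ∣ ((A : ℤ) + 5) *
      ((2 * (m : ℤ) + 5) * ((x' : ℤ) - x) + (4 * (m : ℤ) + 12) * ((y' : ℤ) - y)) :=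
    (dvd_add_right h2).mp hdvd
  have hrelz : ((A : ℤ) + 5) * ((m : ℤ) + 1) = 4 * ((Y : ℤ) + (m : ℤ) + 3) := by exact_mod_cast hrel
  have hcop : IsCoprime ((sv m Y : ℤ)) ((A : ℤ) + 5) := by
    refine ⟨1, -(((m : ℤ) + 1) * ((m : ℤ) + 3)), ?_⟩
    simp only [sv]; push_cast
    linear_combination (-((m : ℤ) + 3)) * hrelz
  have hD : (sv m Y : ℤ) ∣
      (2 * (m : ℤ) + 5) * ((x' : ℤ) - x) + (4 * (m : ℤ) + 12) * ((y' : ℤ) - y) :=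
    hcop.dvd_of_dvd_mul_left h1
  obtain ⟨k, hk⟩ := hD
  have hspos : (0 : ℤ) < (sv m Y : ℤ) := by exact_mod_cast sv_pos m Y
  -- upper bound
  have hub : (2 * (m : ℤ) + 5) * ((x' : ℤ) - x) + (4 * (m : ℤ) + 12) * ((y' : ℤ) - y)
      < 3 * (sv m Y : ℤ) := by
    have e3 : (0 : ℤ) ≤ (2 * (m : ℤ) + 5) * (x : ℤ) := by positivity
    have e4 : (0 : ℤ) ≤ (4 * (m : ℤ) + 12) * (y : ℤ) := by positivity
    have e5 : (0 : ℤ) ≤ (m : ℤ) * (Y : ℤ) := by positivity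
    rcases hp2 with ⟨u1, u2⟩ | ⟨u1, u2, u3⟩
    · have c1 : (x' : ℤ) ≤ 2 * (m : ℤ) + 4 := by exact_mod_cast (by omega : x' ≤ 2 * m + 4)
      have c2 : (y' : ℤ) ≤ (Y : ℤ) + 2 * (m : ℤ) + 5 := by
        exact_mod_cast (by omega : y' ≤ Y + 2 * m + 5)
      have e1 : (2 * (m : ℤ) + 5) * (x' : ℤ) ≤ (2 * (m : ℤ) + 5) * (2 * (m : ℤ) + 4) :=
        mul_le_mul_of_nonneg_left c1 (by positivity)
      have e2 : (4 * (m : ℤ) + 12) * (y' : ℤ)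
          ≤ (4 * (m : ℤ) + 12) * ((Y : ℤ) + 2 * (m : ℤ) + 5) :=
        mul_le_mul_of_nonneg_left c2 (by positivity)
      have e6 : (0 : ℤ) ≤ (m : ℤ) := Int.ofNat_nonneg m
      have e7 : (0 : ℤ) ≤ (Y : ℤ) := Int.ofNat_nonneg Y
      simp only [sv]; push_cast; nlinarith [e1, e2, e3, e4, e5, e6, e7]
    · have c1 : (x' : ℤ) ≤ 4 * (m : ℤ) + 11 := by exact_mod_cast (by omega : x' ≤ 4 * m + 11)
      have c2 : (y' : ℤ) ≤ (Y : ℤ) := by exact_mod_cast (by omega : y' ≤ Y)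
      have e1 : (2 * (m : ℤ) + 5) * (x' : ℤ) ≤ (2 * (m : ℤ) + 5) * (4 * (m : ℤ) + 11) :=
        mul_le_mul_of_nonneg_left c1 (by positivity)
      have e2 : (4 * (m : ℤ) + 12) * (y' : ℤ) ≤ (4 * (m : ℤ) + 12) * (Y : ℤ) :=
        mul_le_mul_of_nonneg_left c2 (by positivity)
      have e6 : (0 : ℤ) ≤ (m : ℤ) := Int.ofNat_nonneg m
      have e7 : (0 : ℤ) ≤ (Y : ℤ) := Int.ofNat_nonneg Y
      simp only [sv]; push_cast; nlinarith [e1, e2, e3, e4, e5, e6, e7]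
  -- lower bound
  have hlb : -(3 * (sv m Y : ℤ)) <
      (2 * (m : ℤ) + 5) * ((x' : ℤ) - x) + (4 * (m : ℤ) + 12) * ((y' : ℤ) - y) := by
    have e3 : (0 : ℤ) ≤ (2 * (m : ℤ) + 5) * (x' : ℤ) := by positivity
    have e4 : (0 : ℤ) ≤ (4 * (m : ℤ) + 12) * (y' : ℤ) := by positivity
    have e5 : (0 : ℤ) ≤ (m : ℤ) * (Y : ℤ) := by positivity
    rcases hp1 with ⟨u1, u2⟩ | ⟨u1, u2, u3⟩
    · have c1 : (x : ℤ) ≤ 2 * (m : ℤ) + 4 := by exact_mod_cast (by omega : x ≤ 2 * m + 4)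
      have c2 : (y : ℤ) ≤ (Y : ℤ) + 2 * (m : ℤ) + 5 := by
        exact_mod_cast (by omega : y ≤ Y + 2 * m + 5)
      have e1 : (2 * (m : ℤ) + 5) * (x : ℤ) ≤ (2 * (m : ℤ) + 5) * (2 * (m : ℤ) + 4) :=
        mul_le_mul_of_nonneg_left c1 (by positivity)
      have e2 : (4 * (m : ℤ) + 12) * (y : ℤ)
          ≤ (4 * (m : ℤ) + 12) * ((Y : ℤ) + 2 * (m : ℤ) + 5) :=
        mul_le_mul_of_nonneg_left c2 (by positivity)
      have e6 : (0 : ℤ) ≤ (m : ℤ) := Int.ofNat_nonneg m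
      have e7 : (0 : ℤ) ≤ (Y : ℤ) := Int.ofNat_nonneg Y
      simp only [sv]; push_cast; nlinarith [e1, e2, e3, e4, e5, e6, e7]
    · have c1 : (x : ℤ) ≤ 4 * (m : ℤ) + 11 := by exact_mod_cast (by omega : x ≤ 4 * m + 11)
      have c2 : (y : ℤ) ≤ (Y : ℤ) := by exact_mod_cast (by omega : y ≤ Y)
      have e1 : (2 * (m : ℤ) + 5) * (x : ℤ) ≤ (2 * (m : ℤ) + 5) * (4 * (m : ℤ) + 11) :=
        mul_le_mul_of_nonneg_left c1 (by positivity)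
      have e2 : (4 * (m : ℤ) + 12) * (y : ℤ) ≤ (4 * (m : ℤ) + 12) * (Y : ℤ) :=
        mul_le_mul_of_nonneg_left c2 (by positivity)
      have e6 : (0 : ℤ) ≤ (m : ℤ) := Int.ofNat_nonneg m
      have e7 : (0 : ℤ) ≤ (Y : ℤ) := Int.ofNat_nonneg Y
      simp only [sv]; push_cast; nlinarith [e1, e2, e3, e4, e5, e6, e7]
  have hk3 : k < 3 := by
    have : (sv m Y : ℤ) * k < (sv m Y : ℤ) * 3 := by rw [← hk]; linarith
    exact lt_of_mul_lt_mul_left this (le_of_lt hspos)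
  have hk3' : -3 < k := by
    have : (sv m Y : ℤ) * (-3) < (sv m Y : ℤ) * k := by rw [← hk]; linarith
    exact lt_of_mul_lt_mul_left this (le_of_lt hspos)
  have hsvz : ((sv m Y : ℤ)) = 4 * ((m : ℤ) + 3) * ((Y : ℤ) + (m : ℤ) + 3) + 1 := by
    simp only [sv]; push_cast; ring
  rcases le_or_gt 0 k with hk0 | hk0
  · have heq : (2 * (m : ℤ) + 5) * ((x' : ℤ) - x) + (4 * (m : ℤ) + 12) * ((y' : ℤ) - y)
        = k * (4 * ((m : ℤ) + 3) * ((Y : ℤ) + (m : ℤ) + 3) + 1) := by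
      rw [hk, hsvz]; ring
    obtain ⟨hxe, hye⟩ := inj_core A m Y x y x' y' hp1 hp2 k hk0 hk3 heq
    simp [Prod.ext_iff, hxe, hye]
  · have heq : (2 * (m : ℤ) + 5) * ((x : ℤ) - x') + (4 * (m : ℤ) + 12) * ((y : ℤ) - y')
        = (-k) * (4 * ((m : ℤ) + 3) * ((Y : ℤ) + (m : ℤ) + 3) + 1) := by
      rw [← hsvz]; linear_combination -hk
    obtain ⟨hxe, hye⟩ := inj_core A m Y x' y' x y hp2 hp1 (-k) (by omega) (by omega) heq
    simp [Prod.ext_iff, hxe, hye]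

/-- Minimality: each `ν p`, `p ∈ Rg`, is minimal in its residue class within the semigroup. -/
lemma apery_min (A m Y : ℕ) (hrel : (A + 5) * (m + 1) = 4 * (Y + m + 3)) :
    ∀ p ∈ Rg m Y, ∀ w ∈ AddSubmonoid.closure ({sv m Y, tv A m Y, uv A m Y} : Set ℕ),
      w ≡ nuf A m Y p [MOD sv m Y] → nuf A m Y p ≤ w := by
  intro p hp w hw hmod
  obtain ⟨z, x, y, rfl⟩ := mem_closure_triple.mp hw
  obtain ⟨p', hp', hle, hmod'⟩ := reduce A m Y (x * tv A m Y + y * uv A m Y) x y rfl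
  have hmod2 : nuf A m Y p' ≡ z * sv m Y + (x * tv A m Y + y * uv A m Y) [MOD sv m Y] := by
    refine hmod'.trans ?_
    have h0 : (0 : ℕ) ≡ z * sv m Y [MOD sv m Y] :=
      ((Nat.modEq_zero_iff_dvd).2 ⟨z, mul_comm z _⟩).symm
    simpa [add_comm] using (Nat.ModEq.add_right (x * tv A m Y + y * uv A m Y) h0)
  have : p' = p := inj A m Y hrel p' hp' p hp (hmod2.trans (by rwa [add_assoc] at hmod))
  subst this
  calc nuf A m Y p' ≤ x * tv A m Y + y * uv A m Y := hle
    _ ≤ z * sv m Y + (x * tv A m Y + y * uv A m Y) := Nat.le_add_left _ _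
    _ = z * sv m Y + x * tv A m Y + y * uv A m Y := by ring

/-- Counting lemma: genus times `s` plus Gauss sum equals the sum of the Apéry elements. -/
lemma genus_count (A m Y : ℕ) (hrel : (A + 5) * (m + 1) = 4 * (Y + m + 3)) :
    (sylvesterNumber {sv m Y, tv A m Y, uv A m Y}) * sv m Y
        + (∑ r ∈ Finset.range (sv m Y), r)
      = ∑ p ∈ Rg m Y, nuf A m Y p := by
  have hspos := sv_pos m Y
  set s := sv m Y with hs
  set C := AddSubmonoid.closure ({sv m Y, tv A m Y, uv A m Y} : Set ℕ) with hC
  have hinjOn : Set.InjOn (fun p => nuf A m Y p % s) (Rg m Y) := by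
    intro p hp p' hp' h
    exact inj A m Y hrel p (Finset.mem_coe.mp hp) p' (Finset.mem_coe.mp hp') h
  have himg : (Rg m Y).image (fun p => nuf A m Y p % s) = Finset.range s := by
    apply Finset.eq_of_subset_of_card_le
    · intro r hr
      simp only [Finset.mem_image] at hr
      obtain ⟨p, _, rfl⟩ := hr
      exact Finset.mem_range.mpr (Nat.mod_lt _ hspos)
    · rw [Finset.card_range, Finset.card_image_of_injOn hinjOn, card_Rg]
  set G : Finset ℕ := (Rg m Y).biUnion fun p =>
    (Finset.range (nuf A m Y p / s)).image fun j => nuf A m Y p % s + j * s with hG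
  -- the set of gaps is G
  have hgaps : {w : ℕ | w ∉ C} = ↑G := by
    ext w
    simp only [Set.mem_setOf_eq, Finset.coe_biUnion, Set.mem_iUnion, Finset.mem_coe,
      Finset.mem_image, Finset.mem_range, hG, Finset.mem_biUnion]
    constructor
    · intro hw
      have hr : w % s ∈ Finset.range s := Finset.mem_range.mpr (Nat.mod_lt _ hspos)
      rw [← himg] at hr
      obtain ⟨p, hp, hpr⟩ := Finset.mem_image.mp hr
      have hlt : w < nuf A m Y p := by
        by_contra hge
        push_neg at hge
        have hmodeq : nuf A m Y p ≡ w [MOD s] := by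
          unfold Nat.ModEq; rw [hpr]
        obtain ⟨d, hd⟩ := (Nat.modEq_iff_dvd' hge).mp hmodeq
        have hwd : w = s * d + nuf A m Y p := (Nat.sub_eq_iff_eq_add hge).mp hd
        apply hw
        rw [hC]
        refine mem_closure_triple.mpr ⟨d, p.1, p.2, ?_⟩
        rw [hwd, nuf]; ring
      refine ⟨p, hp, w / s, ?_, ?_⟩
      · have e1 : w % s + s * (w / s) = w := Nat.mod_add_div w s
        have e2 : nuf A m Y p % s + s * (nuf A m Y p / s) = nuf A m Y p :=
          Nat.mod_add_div _ s
        have : s * (w / s) < s * (nuf A m Y p / s) := by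
          rw [hpr] at e2; linarith
        exact Nat.lt_of_mul_lt_mul_left this
      · rw [hpr, mul_comm, Nat.mod_add_div w s]
    · rintro ⟨p, hp, j, hj, rfl⟩
      intro hw
      have hmodeq : nuf A m Y p % s + j * s ≡ nuf A m Y p [MOD s] := by
        unfold Nat.ModEq
        rw [Nat.add_mul_mod_self_right, Nat.mod_eq_of_lt (Nat.mod_lt _ hspos)]
      have hge := apery_min A m Y hrel p hp _ hw hmodeq
      have e2 : nuf A m Y p % s + s * (nuf A m Y p / s) = nuf A m Y p := Nat.mod_add_div _ s
      have h1 : (j + 1) * s ≤ (nuf A m Y p / s) * s :=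
        Nat.mul_le_mul_right s (by omega)
      linarith [h1, e2, hge, hspos]
  -- cardinality of G
  have hcardG : G.card = ∑ p ∈ Rg m Y, nuf A m Y p / s := by
    rw [hG, Finset.card_biUnion]
    · apply Finset.sum_congr rfl
      intro p _
      rw [Finset.card_image_of_injective _ ?_, Finset.card_range]
      intro j j' hjj
      have h2 : j * s = j' * s := Nat.add_left_cancel hjj
      exact Nat.eq_of_mul_eq_mul_right hspos h2
    · intro p hp p' hp' hne
      rw [Function.onFun, Finset.disjoint_left]
      intro w hw hw'
      obtain ⟨j, _, rfl⟩ := Finset.mem_image.mp hw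
      obtain ⟨j', _, he⟩ := Finset.mem_image.mp hw'
      apply hne
      apply inj A m Y hrel p hp p' hp'
      unfold Nat.ModEq
      have r1 : (nuf A m Y p % s + j * s) % s = nuf A m Y p % s := by
        rw [Nat.add_mul_mod_self_right, Nat.mod_eq_of_lt (Nat.mod_lt _ hspos)]
      have r2 : (nuf A m Y p' % s + j' * s) % s = nuf A m Y p' % s := by
        rw [Nat.add_mul_mod_self_right, Nat.mod_eq_of_lt (Nat.mod_lt _ hspos)]
      rw [← r1, ← r2, he]
  -- genus = card G
  have hgen : sylvesterNumber {sv m Y, tv A m Y, uv A m Y} = G.card := by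
    simp only [sylvesterNumber, ← hC]
    rw [hgaps, Set.ncard_coe_finset]
  rw [hgen, hcardG]
  -- sum juggling
  have hsum1 : ∑ p ∈ Rg m Y, nuf A m Y p
      = ∑ p ∈ Rg m Y, (s * (nuf A m Y p / s) + nuf A m Y p % s) := by
    apply Finset.sum_congr rfl
    intro p _
    rw [Nat.div_add_mod]
  have hsum2 : ∑ p ∈ Rg m Y, (nuf A m Y p % s) = ∑ r ∈ Finset.range s, r := by
    rw [← himg, Finset.sum_image hinjOn]
  rw [hsum1, Finset.sum_add_distrib, hsum2, ← Finset.mul_sum]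
  ring

/-- Helper: sum of `ν` over a product set. -/
lemma sum_product_linear (A B : Finset ℕ) (t u : ℕ) :
    ∑ p ∈ A ×ˢ B, (p.1 * t + p.2 * u)
      = B.card * ((∑ x ∈ A, x) * t) + A.card * ((∑ y ∈ B, y) * u) := by
  rw [Finset.sum_product]
  have step : ∀ x ∈ A, (∑ y ∈ B, ((x, y).1 * t + (x, y).2 * u))
      = B.card * (x * t) + (∑ y ∈ B, y) * u := by
    intro x _
    dsimp only
    rw [Finset.sum_add_distrib, Finset.sum_const, smul_eq_mul, ← Finset.sum_mul]
  calc (∑ x ∈ A, ∑ y ∈ B, ((x, y).1 * t + (x, y).2 * u))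
      = ∑ x ∈ A, (B.card * (x * t) + (∑ y ∈ B, y) * u) := Finset.sum_congr rfl step
    _ = (∑ x ∈ A, B.card * (x * t)) + A.card * ((∑ y ∈ B, y) * u) := by
        rw [Finset.sum_add_distrib, Finset.sum_const, smul_eq_mul]
    _ = B.card * ((∑ x ∈ A, x) * t) + A.card * ((∑ y ∈ B, y) * u) := by
        rw [← Finset.mul_sum, ← Finset.sum_mul]

/-- The explicit value of twice the sum of the Apéry elements. -/
lemma sum_nuf (A m Y : ℕ) :
    2 * ∑ p ∈ Rg m Y, nuf A m Y p
      = tv A m Y * ((Y + 2 * m + 6) * ((2 * m + 5) * (2 * m + 4))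
            + (Y + 1) * ((2 * m + 7) * (6 * m + 16)))
        + uv A m Y * ((2 * m + 5) * ((Y + 2 * m + 6) * (Y + 2 * m + 5))
            + (2 * m + 7) * ((Y + 1) * Y)) := by
  have hnu : ∀ p : ℕ × ℕ, nuf A m Y p = p.1 * tv A m Y + p.2 * uv A m Y := fun p => rfl
  rw [Rg, Finset.sum_union (Rg_disjoint m Y)]
  simp only [nuf]
  rw [sum_product_linear, sum_product_linear]
  have g1 : (∑ i ∈ Finset.range (2 * m + 5), i) * 2 = (2 * m + 5) * (2 * m + 4) := by
    rw [Finset.sum_range_id_mul_two, show 2 * m + 5 - 1 = 2 * m + 4 from by omega]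
  have g2 : (∑ i ∈ Finset.range (Y + 2 * m + 6), i) * 2 = (Y + 2 * m + 6) * (Y + 2 * m + 5) := by
    rw [Finset.sum_range_id_mul_two, show Y + 2 * m + 6 - 1 = Y + 2 * m + 5 from by omega]
  have g3 : (∑ i ∈ Finset.range (Y + 1), i) * 2 = (Y + 1) * Y := by
    rw [Finset.sum_range_id_mul_two, show Y + 1 - 1 = Y from by omega]
  have g4 : (∑ i ∈ Finset.Ico (2 * m + 5) (4 * m + 12), i) * 2 = (2 * m + 7) * (6 * m + 16) := by
    rw [Finset.sum_Ico_eq_sum_range]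
    have h : 4 * m + 12 - (2 * m + 5) = 2 * m + 7 := by omega
    have gg : (∑ i ∈ Finset.range (2 * m + 7), i) * 2 = (2 * m + 7) * (2 * m + 6) := by
      rw [Finset.sum_range_id_mul_two, show 2 * m + 7 - 1 = 2 * m + 6 from by omega]
    rw [h, Finset.sum_add_distrib, Finset.sum_const, Finset.card_range, smul_eq_mul,
      add_mul, gg]
    ring
  simp only [Finset.card_range, Nat.card_Ico]
  have h : 4 * m + 12 - (2 * m + 5) = 2 * m + 7 := by omega
  rw [h]
  zify at g1 g2 g3 g4 ⊢
  linear_combination (((Y : ℤ) + 2 * m + 6) * (tv A m Y : ℤ)) * g1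
    + ((2 * (m : ℤ) + 5) * (uv A m Y : ℤ)) * g2
    + ((2 * (m : ℤ) + 7) * (uv A m Y : ℤ)) * g3
    + (((Y : ℤ) + 1) * (tv A m Y : ℤ)) * g4

end StarCase2

open StarCase2 in
theorem sylvester_twoStepStar_case2 (a n : ℕ) (ha : 5 ≤ a) (hn : 3 ≤ n) (hbig : 4 * n ≤ a * (n - 2)) (hmod : a % 4 = 0 ∨ (a % 4 = 1 ∧ n % 4 = 2) ∨ (a % 4 = 2 ∧ n % 2 = 0) ∨ (a % 4 = 3 ∧ n % 4 = 2)) :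
    (sylvesterNumber
        {twoStepStar a n, twoStepStar a (n + 1), twoStepStar a (n + 2)} : ℚ) =
      (((a : ℚ) ^ 2 + 16 * a - 16) * n ^ 3 - 12 * (a : ℚ) * n ^ 2 - (4 * (a : ℚ) ^ 2 + 14 * a - 24) * n + 4 * a - 8) / 8 := by
  obtain ⟨A, rfl⟩ : ∃ A, a = A + 5 := ⟨a - 5, by omega⟩
  obtain ⟨m, rfl⟩ : ∃ m, n = m + 3 := ⟨n - 3, by omega⟩
  -- divisibility: 4 ∣ (A+5)*(m+1)
  have hdvd : 4 ∣ (A + 5) * (m + 1) := by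
    rcases hmod with h | ⟨h1, h2⟩ | ⟨h1, h2⟩ | ⟨h1, h2⟩
    · obtain ⟨k, hk⟩ : 4 ∣ (A + 5) := by omega
      exact ⟨k * (m + 1), by rw [hk]; ring⟩
    · obtain ⟨k, hk⟩ : 4 ∣ (m + 1) := by omega
      exact ⟨(A + 5) * k, by rw [hk]; ring⟩
    · obtain ⟨k, hk⟩ : 2 ∣ (A + 5) := by omega
      obtain ⟨l, hl⟩ : 2 ∣ (m + 1) := by omega
      exact ⟨k * l, by rw [hk, hl]; ring⟩
    · obtain ⟨k, hk⟩ : 4 ∣ (m + 1) := by omega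
      exact ⟨(A + 5) * k, by rw [hk]; ring⟩
  obtain ⟨c, hc⟩ := hdvd
  have hbig' : m + 3 ≤ c := by
    have h2 : m + 3 - 2 = m + 1 := by omega
    rw [h2, hc] at hbig
    omega
  obtain ⟨Y, hrel⟩ : ∃ Y, (A + 5) * (m + 1) = 4 * (Y + m + 3) := by
    refine ⟨c - (m + 3), ?_⟩
    rw [hc]
    omega
  -- rewrite the three star numbers
  have e1 : twoStepStar (A + 5) (m + 3) = sv m Y := by
    have h2 : m + 3 - 2 = m + 1 := by omega
    rw [twoStepStar, h2, sv]
    have h3 : (A + 5) * (m + 3) * (m + 1) = (m + 3) * ((A + 5) * (m + 1)) := by ring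
    rw [h3, hrel]; ring
  have e2 : twoStepStar (A + 5) (m + 3 + 1) = tv A m Y := by
    have h2 : m + 3 + 1 - 2 = m + 2 := by omega
    rw [twoStepStar, h2, tv, sv]
    have h3 : (A + 5) * (m + 3 + 1) * (m + 2)
        = (m + 3) * ((A + 5) * (m + 1)) + (A + 5) * (2 * m + 5) := by ring
    rw [h3, hrel]; ring
  have e3 : twoStepStar (A + 5) (m + 3 + 2) = uv A m Y := by
    have h2 : m + 3 + 2 - 2 = m + 3 := by omega
    rw [twoStepStar, h2, uv, sv]
    have h3 : (A + 5) * (m + 3 + 2) * (m + 3)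
        = (m + 3) * ((A + 5) * (m + 1)) + (A + 5) * (4 * m + 12) := by ring
    rw [h3, hrel]; ring
  rw [e1, e2, e3]
  -- the counting identity
  have hgc := genus_count A m Y hrel
  have hsum := sum_nuf A m Y
  have hg : (∑ r ∈ Finset.range (sv m Y), r) * 2 = sv m Y * (4 * (m + 3) * (Y + m + 3)) := by
    rw [Finset.sum_range_id_mul_two, sv, Nat.add_sub_cancel]
  set g := sylvesterNumber ({sv m Y, tv A m Y, uv A m Y} : Set ℕ) with hgdef
  have key : 2 * (g * sv m Y) + sv m Y * (4 * (m + 3) * (Y + m + 3))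
      = tv A m Y * ((Y + 2 * m + 6) * ((2 * m + 5) * (2 * m + 4))
            + (Y + 1) * ((2 * m + 7) * (6 * m + 16)))
        + uv A m Y * ((2 * m + 5) * ((Y + 2 * m + 6) * (Y + 2 * m + 5))
            + (2 * m + 7) * ((Y + 1) * Y)) := by
    rw [← hsum, ← hg]
    have h2 : 2 * (g * sv m Y + ∑ r ∈ Finset.range (sv m Y), r)
        = 2 * ∑ p ∈ Rg m Y, nuf A m Y p := by rw [hgc]
    linarith [h2]
  -- pass to ℚ
  have keyQ : 2 * ((g : ℚ) * (4 * ((m : ℚ) + 3) * ((Y : ℚ) + (m : ℚ) + 3) + 1))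
      + (4 * ((m : ℚ) + 3) * ((Y : ℚ) + (m : ℚ) + 3) + 1) * (4 * ((m : ℚ) + 3) * ((Y : ℚ) + (m : ℚ) + 3))
      = ((4 * ((m : ℚ) + 3) * ((Y : ℚ) + (m : ℚ) + 3) + 1) + ((A : ℚ) + 5) * (2 * (m : ℚ) + 5))
          * (((Y : ℚ) + 2 * (m : ℚ) + 6) * ((2 * (m : ℚ) + 5) * (2 * (m : ℚ) + 4))
            + ((Y : ℚ) + 1) * ((2 * (m : ℚ) + 7) * (6 * (m : ℚ) + 16)))
        + ((4 * ((m : ℚ) + 3) * ((Y : ℚ) + (m : ℚ) + 3) + 1) + ((A : ℚ) + 5) * (4 * (m : ℚ) + 12))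
          * ((2 * (m : ℚ) + 5) * (((Y : ℚ) + 2 * (m : ℚ) + 6) * ((Y : ℚ) + 2 * (m : ℚ) + 5))
            + (2 * (m : ℚ) + 7) * (((Y : ℚ) + 1) * (Y : ℚ))) := by
    have := congrArg (Nat.cast : ℕ → ℚ) key
    simp only [tv, uv, sv] at this
    push_cast at this
    linarith [this]
  have hrelQ : ((A : ℚ) + 5) * ((m : ℚ) + 1) = 4 * ((Y : ℚ) + (m : ℚ) + 3) := by
    exact_mod_cast hrel
  have hne : (16 : ℚ) * (4 * ((m : ℚ) + 3) * ((Y : ℚ) + (m : ℚ) + 3) + 1) ≠ 0 := by positivity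
  push_cast
  apply mul_left_cancel₀ hne
  linear_combination 8 * keyQ +
    (-(16354 : ℚ) - 6192 * (Y : ℚ) - 288 * (Y : ℚ) ^ 2 - 21560 * (m : ℚ)
      - 6192 * (m : ℚ) * (Y : ℚ) - 192 * (m : ℚ) * (Y : ℚ) ^ 2 - 10722 * (m : ℚ) ^ 2
      - 2072 * (m : ℚ) ^ 2 * (Y : ℚ) - 32 * (m : ℚ) ^ 2 * (Y : ℚ) ^ 2 - 2384 * (m : ℚ) ^ 3
      - 232 * (m : ℚ) ^ 3 * (Y : ℚ) - 200 * (m : ℚ) ^ 4 - 1110 * (A : ℚ)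
      - 360 * (A : ℚ) * (Y : ℚ) - 1312 * (A : ℚ) * (m : ℚ) - 312 * (A : ℚ) * (m : ℚ) * (Y : ℚ)
      - 578 * (A : ℚ) * (m : ℚ) ^ 2 - 88 * (A : ℚ) * (m : ℚ) ^ 2 * (Y : ℚ)
      - 112 * (A : ℚ) * (m : ℚ) ^ 3 - 8 * (A : ℚ) * (m : ℚ) ^ 3 * (Y : ℚ)
      - 8 * (A : ℚ) * (m : ℚ) ^ 4) * hrelQ
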